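/- arXiv:1802.00192 — 3 statements merged into one kernel-verified Lean document; each statement's English description precedes it below -/
import Mathlib

section
/- If p = 3 divides 2(n-1) exactly once (α = 1, β = 2(n-1)/3) and -3 is a quadratic residue modulo 4(n-1)/3, then the admissible triple (3,11,0) yields invariant lattice T = ⟨β⟩ and co-invariant lattice S ≅ U^{⊕2} ⊕ E_8^{⊕2} ⊕ A_2, as orthogonal primitive sublattices of L with L = T ⊕ S. -/
open Matrix

/-- A submodule of `ℤ^m` is primitive if the quotient by it is torsion-free. -/
def IsPrimitiveSub {m : Type*} (T : Submodule ℤ (m → ℤ)) : Prop :=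
  ∀ (v : m → ℤ) (k : ℤ), k ≠ 0 → k • v ∈ T → v ∈ T

/-- Gram matrix of the hyperbolic plane `U`. -/
def Ugram : Matrix (Fin 2) (Fin 2) ℤ := !![0, 1; 1, 0]

/-- Gram matrix of the negative definite root lattice `A₂`. -/
def A2gram : Matrix (Fin 2) (Fin 2) ℤ := !![-2, 1; 1, -2]

/-- Gram matrix of the negative definite root lattice `E₈`
(nodes 0–6 a chain, node 7 attached to node 2). -/
def E8gram : Matrix (Fin 8) (Fin 8) ℤ := fun i j =>
  if i = j then -2
  else if ((i : ℕ) + 1 = (j : ℕ) ∧ (j : ℕ) ≤ 6) ∨ ((j : ℕ) + 1 = (i : ℕ) ∧ (i : ℕ) ≤ 6)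
    then 1
  else if ((i : ℕ) = 2 ∧ (j : ℕ) = 7) ∨ ((i : ℕ) = 7 ∧ (j : ℕ) = 2) then 1
  else 0

/-- Index type for the lattice `L = U^{⊕3} ⊕ E₈^{⊕2} ⊕ ⟨-2(n-1)⟩` of rank 23. -/
abbrev K3Idx : Type := (Fin 3 × Fin 2) ⊕ ((Fin 2 × Fin 8) ⊕ Unit)

/-- Gram matrix of `L = U^{⊕3} ⊕ E₈^{⊕2} ⊕ ⟨-2(n-1)⟩`. -/
def LK3gram (n : ℕ) : Matrix K3Idx K3Idx ℤ := fun i j =>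
  match i, j with
  | Sum.inl (k, i), Sum.inl (l, j) => if k = l then Ugram i j else 0
  | Sum.inr (Sum.inl (k, i)), Sum.inr (Sum.inl (l, j)) => if k = l then E8gram i j else 0
  | Sum.inr (Sum.inr _), Sum.inr (Sum.inr _) => -(2 * ((n : ℤ) - 1))
  | _, _ => 0

/-- Index type for the rank-22 lattice `U^{⊕2} ⊕ E₈^{⊕2} ⊕ A₂`. -/
abbrev SIdx : Type := (Fin 2 × Fin 2) ⊕ ((Fin 2 × Fin 8) ⊕ Fin 2)

/-- Gram matrix of `U^{⊕2} ⊕ E₈^{⊕2} ⊕ A₂`. -/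
def Sgram : Matrix SIdx SIdx ℤ := fun i j =>
  match i, j with
  | Sum.inl (k, i), Sum.inl (l, j) => if k = l then Ugram i j else 0
  | Sum.inr (Sum.inl (k, i)), Sum.inr (Sum.inl (l, j)) => if k = l then E8gram i j else 0
  | Sum.inr (Sum.inr i), Sum.inr (Sum.inr j) => A2gram i j
  | _, _ => 0

/-! ### Auxiliary material -/

section Aux

set_option linter.unreachableTactic false
set_option linter.unusedTactic false
set_option linter.unnecessarySeqFocus false

lemma conj2 (a b c k : ℤ) :
    !![1,k;0,1]ᵀ * !![a,b;b,c] * !![1,k;0,1]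
      = !![a, b + k*a; b + k*a, c + 2*k*b + k^2*a] := by
  ext i j
  fin_cases i <;> fin_cases j <;>
    simp [Matrix.mul_apply, Fin.sum_univ_succ] <;> ring

lemma unit2 (k : ℤ) : !![1,k;0,1] * !![1,-k;0,1] = (1 : Matrix (Fin 2) (Fin 2) ℤ) := by
  ext i j
  fin_cases i <;> fin_cases j <;>
    simp [Matrix.mul_apply, Fin.sum_univ_succ]

lemma swap2 (a b c : ℤ) :
    !![(0:ℤ),1;1,0]ᵀ * !![a,b;b,c] * !![0,1;1,0] = !![c,b;b,a] := by
  ext i j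
  fin_cases i <;> fin_cases j <;>
    simp [Matrix.mul_apply, Fin.sum_univ_succ]

lemma swap2inv : !![(0:ℤ),1;1,0] * !![0,1;1,0] = 1 := by
  ext i j
  fin_cases i <;> fin_cases j <;>
    simp [Matrix.mul_apply, Fin.sum_univ_succ]

lemma flip2 (a b c : ℤ) :
    !![(1:ℤ),0;0,-1]ᵀ * !![a,b;b,c] * !![1,0;0,-1] = !![a,-b;-b,c] := by
  ext i j
  fin_cases i <;> fin_cases j <;>
    simp [Matrix.mul_apply, Fin.sum_univ_succ]

lemma flip2inv : !![(1:ℤ),0;0,-1] * !![1,0;0,-1] = 1 := by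
  ext i j
  fin_cases i <;> fin_cases j <;>
    simp [Matrix.mul_apply, Fin.sum_univ_succ]

/-- Gauss reduction: any positive definite even binary form of determinant 3 is
integrally equivalent to the `A₂`-form `!![2,-1;-1,2]`. -/
lemma reduce_binary : ∀ N : ℕ, ∀ a b c : ℤ, a.natAbs + b.natAbs < N → 0 < a →
    Even a → Even c → a * c - b ^ 2 = 3 →
    ∃ R R' : Matrix (Fin 2) (Fin 2) ℤ,
      R * R' = 1 ∧ R' * R = 1 ∧ Rᵀ * !![a,b;b,c] * R = !![2,-1;-1,2] := by
  intro N
  induction N with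
  | zero => intro a b c hm ha _ _ _; omega
  | succ N ih =>
    intro a b c hm ha hea hec hdet
    have hc : 0 < c := by nlinarith
    by_cases hb : a < 2 * |b|
    · -- reduce b
      have hbne : b ≠ 0 := by rcases abs_cases b with ⟨h1,h2⟩|⟨h1,h2⟩ <;> omega
      set k : ℤ := if 0 < b then -1 else 1 with hk
      set b' : ℤ := b + k * a with hb'
      have hb'lt : b'.natAbs < b.natAbs := by
        rcases abs_cases b with ⟨h1,h2⟩|⟨h1,h2⟩
        · have : 0 < b := by omega
          simp only [hk, if_pos this] at hb'
          omega
        · have : ¬ (0 < b) := by omega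
          simp only [hk, if_neg this] at hb'
          omega
      set c' : ℤ := c + 2*k*b + k^2*a with hc'
      obtain ⟨a1, ha1⟩ := id hea
      obtain ⟨c1, hc1⟩ := id hec
      have hec' : Even c' := ⟨c1 + k*b + k^2*a1, by rw [hc', hc1, ha1]; ring⟩
      have hdet' : a * c' - b' ^ 2 = 3 := by rw [hc', hb']; linear_combination hdet
      obtain ⟨R1, R1', h1, h2, h3⟩ := ih a b' c' (by omega) ha hea hec' hdet'
      refine ⟨!![1,k;0,1] * R1, R1' * !![1,-k;0,1], ?_, ?_, ?_⟩
      · calc !![1,k;0,1] * R1 * (R1' * !![1,-k;0,1])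
            = !![1,k;0,1] * (R1 * R1') * !![1,-k;0,1] := by
              rw [Matrix.mul_assoc, Matrix.mul_assoc, Matrix.mul_assoc]
          _ = 1 := by rw [h1, Matrix.mul_one, unit2]
      · calc R1' * !![1,-k;0,1] * (!![1,k;0,1] * R1)
            = R1' * (!![1,-k;0,1] * !![1,k;0,1]) * R1 := by
              rw [Matrix.mul_assoc, Matrix.mul_assoc, Matrix.mul_assoc]
          _ = 1 := by
              have : !![(1:ℤ),-k;0,1] * !![1,k;0,1] = 1 := by
                have := unit2 (-k); simpa using this
              rw [this, Matrix.mul_one, h2]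
      · have key : (!![1,k;0,1] * R1)ᵀ * !![a,b;b,c] * (!![1,k;0,1] * R1)
            = R1ᵀ * (!![1,k;0,1]ᵀ * !![a,b;b,c] * !![1,k;0,1]) * R1 := by
          rw [Matrix.transpose_mul]; noncomm_ring
        rw [key, conj2]
        have : !![a, b + k*a; b + k*a, c + 2*k*b + k^2*a] = !![a, b'; b', c'] := by
          rw [hb', hc']
        rw [this, h3]
    · by_cases hca : c < a
      · -- swap
        have hdet' : c * a - b ^ 2 = 3 := by linarith [mul_comm a c]
        obtain ⟨R1, R1', h1, h2, h3⟩ := ih c b a (by omega) hc hec hea hdet'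
        refine ⟨!![0,1;1,0] * R1, R1' * !![0,1;1,0], ?_, ?_, ?_⟩
        · calc !![(0:ℤ),1;1,0] * R1 * (R1' * !![0,1;1,0])
              = !![(0:ℤ),1;1,0] * (R1 * R1') * !![0,1;1,0] := by
                rw [Matrix.mul_assoc, Matrix.mul_assoc, Matrix.mul_assoc]
            _ = 1 := by rw [h1, Matrix.mul_one, swap2inv]
        · calc R1' * !![(0:ℤ),1;1,0] * (!![0,1;1,0] * R1)
              = R1' * (!![(0:ℤ),1;1,0] * !![0,1;1,0]) * R1 := by
                rw [Matrix.mul_assoc, Matrix.mul_assoc, Matrix.mul_assoc]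
            _ = 1 := by rw [swap2inv, Matrix.mul_one, h2]
        · have key : (!![(0:ℤ),1;1,0] * R1)ᵀ * !![a,b;b,c] * (!![0,1;1,0] * R1)
              = R1ᵀ * (!![(0:ℤ),1;1,0]ᵀ * !![a,b;b,c] * !![0,1;1,0]) * R1 := by
            rw [Matrix.transpose_mul]; noncomm_ring
          rw [key, swap2, h3]
      · -- reduced
        have hb2 : 2 * |b| ≤ a := by omega
        have haa : a ≤ 2 := by nlinarith [sq_abs b, abs_nonneg b]
        obtain ⟨a1, ha1⟩ := id hea
        have ha2 : a = 2 := by omega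
        subst ha2
        have hbabs : |b| ≤ 1 := by omega
        have : b = -1 ∨ b = 0 ∨ b = 1 := by
          rcases abs_cases b with ⟨h1,h2⟩|⟨h1,h2⟩ <;> omega
        rcases this with rfl | rfl | rfl
        · have hcv : c = 2 := by linarith
          subst hcv
          exact ⟨1, 1, by simp, by simp, by simp⟩
        · exfalso; obtain ⟨c1, hc1⟩ := hec; omega
        · have hcv : c = 2 := by linarith
          subst hcv
          refine ⟨!![1,0;0,-1], !![1,0;0,-1], flip2inv, flip2inv, ?_⟩
          rw [flip2]

/-- Auxiliary "block coordinates" index type. -/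
abbrev RBt : Type := (Fin 2 × Fin 2) ⊕ ((Fin 2 × Fin 8) ⊕ Fin 3)

def eRto : K3Idx → RBt
  | .inl (⟨0,_⟩, i) => .inl (0, i)
  | .inl (⟨1,_⟩, i) => .inl (1, i)
  | .inl (⟨2,_⟩, ⟨0,_⟩) => .inr (.inr 0)
  | .inl (⟨2,_⟩, ⟨1,_⟩) => .inr (.inr 1)
  | .inr (.inl x) => .inr (.inl x)
  | .inr (.inr _) => .inr (.inr 2)

def eRinv : RBt → K3Idx
  | .inl (p, i) => .inl (p.castSucc, i)
  | .inr (.inl x) => .inr (.inl x)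
  | .inr (.inr ⟨0,_⟩) => .inl (2, 0)
  | .inr (.inr ⟨1,_⟩) => .inl (2, 1)
  | .inr (.inr ⟨2,_⟩) => .inr (.inr ())

def eR : K3Idx ≃ RBt := ⟨eRto, eRinv, by decide, by decide⟩

def shufto : Unit ⊕ SIdx → RBt
  | .inl _ => .inr (.inr 0)
  | .inr (.inl p) => .inl p
  | .inr (.inr (.inl q)) => .inr (.inl q)
  | .inr (.inr (.inr ⟨0,_⟩)) => .inr (.inr 1)
  | .inr (.inr (.inr ⟨1,_⟩)) => .inr (.inr 2)

def shufinv : RBt → Unit ⊕ SIdx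
  | .inl p => .inr (.inl p)
  | .inr (.inl q) => .inr (.inr (.inl q))
  | .inr (.inr ⟨0,_⟩) => .inl ()
  | .inr (.inr ⟨1,_⟩) => .inr (.inr (.inr 0))
  | .inr (.inr ⟨2,_⟩) => .inr (.inr (.inr 1))

def shuffle : (Unit ⊕ SIdx) ≃ RBt := ⟨shufto, shufinv, by decide, by decide⟩

def e1U : Fin 1 ≃ Unit := ⟨fun _ => (), fun _ => 0, by decide, by decide⟩

noncomputable def e22 : Fin 22 ≃ SIdx :=
  (Fintype.equivFinOfCardEq (by decide : Fintype.card SIdx = 22)).symm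

noncomputable def eCq : (Fin 1 ⊕ Fin 22) ≃ RBt := (Equiv.sumCongr e1U e22).trans shuffle

def M3m (B t c : ℤ) : Matrix (Fin 3) (Fin 3) ℤ := !![B*t, -t, 3*c; B, 1, 0; c, 0, 1]
def N3m (B t c : ℤ) : Matrix (Fin 3) (Fin 3) ℤ :=
  !![1, t, -(3*c); -B, B*t-3*c^2, 3*c*B; -c, -(t*c), 2*B*t]
def G3m (B : ℤ) : Matrix (Fin 3) (Fin 3) ℤ := !![0,1,0; 1,0,0; 0,0,-(3*B)]
def Gy3m (B t c : ℤ) : Matrix (Fin 3) (Fin 3) ℤ := !![B,0,0; 0,-(2*t),3*c; 0,3*c,-(3*B)]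
def Gym (B t c : ℤ) : Matrix (Fin 2) (Fin 2) ℤ := !![-(2*t),3*c; 3*c,-(3*B)]
def GUm : Matrix (Fin 2 × Fin 2) (Fin 2 × Fin 2) ℤ :=
  fun p q => if p.1 = q.1 then Ugram p.2 q.2 else 0
def GEm : Matrix (Fin 2 × Fin 8) (Fin 2 × Fin 8) ℤ :=
  fun p q => if p.1 = q.1 then E8gram p.2 q.2 else 0
def GBm (B : ℤ) : Matrix RBt RBt ℤ := fromBlocks GUm 0 0 (fromBlocks GEm 0 0 (G3m B))
def BMm (B t c : ℤ) : Matrix RBt RBt ℤ := fromBlocks 1 0 0 (fromBlocks 1 0 0 (M3m B t c))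
def BNm (B t c : ℤ) : Matrix RBt RBt ℤ := fromBlocks 1 0 0 (fromBlocks 1 0 0 (N3m B t c))

lemma M3N3 (B t c : ℤ) (h : 2*B*t - 3*c^2 = 1) :
    M3m B t c * N3m B t c = 1 ∧ N3m B t c * M3m B t c = 1 := by
  constructor <;>
  · ext i j
    fin_cases i <;> fin_cases j <;>
      simp [M3m, N3m, Matrix.mul_apply, Fin.sum_univ_succ, Matrix.one_apply,
        Matrix.vecHead, Matrix.vecTail] <;>
      first
        | linear_combination h
        | linear_combination -h
        | linear_combination B*h
        | linear_combination -B*h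
        | ring

lemma gram3 (B t c : ℤ) (h : 2*B*t - 3*c^2 = 1) :
    (M3m B t c)ᵀ * G3m B * M3m B t c = Gy3m B t c := by
  ext i j
  fin_cases i <;> fin_cases j <;>
    simp [M3m, G3m, Gy3m, Matrix.mul_apply, Fin.sum_univ_succ,
      Matrix.vecHead, Matrix.vecTail] <;>
    first
      | linear_combination h
      | linear_combination -h
      | linear_combination B*h
      | linear_combination -B*h
      | ring

lemma LK_eq (n : ℕ) (B : ℤ) (hBn : 2*((n:ℤ)-1) = 3*B) :
    LK3gram n = (GBm B).submatrix eR eR := by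
  ext i j
  rcases i with ⟨k, a⟩ | x | u <;> rcases j with ⟨l, b⟩ | y | v
  · fin_cases k <;> fin_cases l <;> fin_cases a <;> fin_cases b <;>
      simp [LK3gram, GBm, GUm, G3m, eR, eRto, Ugram] <;> decide
  · fin_cases k <;> fin_cases a <;> rcases y with ⟨l, b⟩ <;>
      simp [LK3gram, GBm, eR, eRto]
  · fin_cases k <;> fin_cases a <;> simp [LK3gram, GBm, G3m, eR, eRto]
  · rcases x with ⟨k, a⟩ <;> fin_cases l <;> fin_cases b <;>
      simp [LK3gram, GBm, eR, eRto]
  · rcases x with ⟨k, a⟩ ; rcases y with ⟨l, b⟩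
    simp [LK3gram, GBm, GEm, eR, eRto]
  · rcases x with ⟨k, a⟩ ; simp [LK3gram, GBm, G3m, eR, eRto, Matrix.vecHead, Matrix.vecTail]
  · fin_cases l <;> fin_cases b <;>
      simp [LK3gram, GBm, G3m, eR, eRto, Matrix.vecHead, Matrix.vecTail]
  · rcases y with ⟨l, b⟩
    simp [LK3gram, GBm, G3m, eR, eRto, Matrix.vecHead, Matrix.vecTail]
  · simp [LK3gram, GBm, G3m, eR, eRto, Matrix.vecHead, Matrix.vecTail]
    omega

lemma Sgram_blocks : fromBlocks GUm 0 0 (fromBlocks GEm 0 0 A2gram) = Sgram := by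
  ext s s'
  rcases s with ⟨k, i⟩ | ⟨k, i⟩ | a <;> rcases s' with ⟨l, j⟩ | ⟨l, j⟩ | b <;> rfl

end Aux

lemma build (n β : ℕ) (B t c : ℤ) (hB : B = (β:ℤ)) (hrel : 2*B*t - 3*c^2 = 1)
    (hBn : 2*((n:ℤ)-1) = 3*B) (hBeven : Even B) (ht : 0 < t) :
    ∃ (tB : Matrix K3Idx (Fin 1) ℤ) (sB : Matrix K3Idx (Fin 22) ℤ),
      Function.Injective tB.mulVecLin ∧ Function.Injective sB.mulVecLin ∧
      IsPrimitiveSub (LinearMap.range tB.mulVecLin) ∧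
      IsPrimitiveSub (LinearMap.range sB.mulVecLin) ∧
      tBᵀ * LK3gram n * sB = 0 ∧
      tBᵀ * LK3gram n * tB = !![(β : ℤ)] ∧
      (∃ (P : Matrix (Fin 22) SIdx ℤ) (Q : Matrix SIdx (Fin 22) ℤ),
        P * Q = 1 ∧ Q * P = 1 ∧ Pᵀ * (sBᵀ * LK3gram n * sB) * P = Sgram) ∧
      Disjoint (LinearMap.range tB.mulVecLin) (LinearMap.range sB.mulVecLin) ∧
      LinearMap.range tB.mulVecLin ⊔ LinearMap.range sB.mulVecLin = ⊤ := by
  classical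
  -- binary form reduction for the A₂ block
  obtain ⟨R, R', hRR', hR'R, hRred⟩ :=
    reduce_binary ((2*t).natAbs + (-(3*c)).natAbs + 1) (2*t) (-(3*c)) (3*B)
      (by omega) (by omega) ⟨t, by ring⟩
      (by obtain ⟨b1, hb1⟩ := hBeven; exact ⟨3*b1, by rw [hb1]; ring⟩)
      (by linear_combination 3*hrel)
  have hGyR : Rᵀ * Gym B t c * R = A2gram := by
    have hneg : Gym B t c = -(!![2*t, -(3*c); -(3*c), 3*B]) := by
      ext i j; fin_cases i <;> fin_cases j <;> simp [Gym] <;> ring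
    rw [hneg, Matrix.mul_neg, Matrix.neg_mul, hRred]
    ext i j; fin_cases i <;> fin_cases j <;> norm_num [A2gram]
  -- the big base-change matrices
  set Mfull : Matrix K3Idx (Fin 1 ⊕ Fin 22) ℤ := (BMm B t c).submatrix ⇑eR ⇑eCq with hMfull
  set Nfull : Matrix (Fin 1 ⊕ Fin 22) K3Idx ℤ := (BNm B t c).submatrix ⇑eCq ⇑eR with hNfull
  have hBMBN : BMm B t c * BNm B t c = 1 := by
    have h := M3N3 B t c hrel
    simp only [BMm, BNm, fromBlocks_multiply, Matrix.mul_one, Matrix.one_mul,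
      Matrix.mul_zero, Matrix.zero_mul, add_zero, zero_add, h.1, fromBlocks_one]
  have hBNBM : BNm B t c * BMm B t c = 1 := by
    have h := M3N3 B t c hrel
    simp only [BMm, BNm, fromBlocks_multiply, Matrix.mul_one, Matrix.one_mul,
      Matrix.mul_zero, Matrix.zero_mul, add_zero, zero_add, h.2, fromBlocks_one]
  have hMN : Mfull * Nfull = 1 := by
    rw [hMfull, hNfull, Matrix.submatrix_mul_equiv (BMm B t c) (BNm B t c) ⇑eR eCq ⇑eR,
      hBMBN, Matrix.submatrix_one_equiv eR]
  have hNM : Nfull * Mfull = 1 := by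
    rw [hMfull, hNfull, Matrix.submatrix_mul_equiv (BNm B t c) (BMm B t c) ⇑eCq eR ⇑eCq,
      hBNBM, Matrix.submatrix_one_equiv eCq]
  -- T and S basis matrices
  set tB : Matrix K3Idx (Fin 1) ℤ := Matrix.of (fun i x => Mfull i (Sum.inl x)) with htB
  set sB : Matrix K3Idx (Fin 22) ℤ := Matrix.of (fun i y => Mfull i (Sum.inr y)) with hsB
  have hsplit : Mfull = fromCols tB sB := by
    ext i z; rcases z with z | z <;> rfl
  set N1 : Matrix (Fin 1) K3Idx ℤ := Matrix.of (fun x i => Nfull (Sum.inl x) i) with hN1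
  set N2 : Matrix (Fin 22) K3Idx ℤ := Matrix.of (fun y i => Nfull (Sum.inr y) i) with hN2
  have hNsplit : Nfull = fromRows N1 N2 := by
    ext z i; rcases z with z | z <;> rfl
  have hfour : fromBlocks (N1*tB) (N1*sB) (N2*tB) (N2*sB) = fromBlocks 1 0 0 1 := by
    rw [← fromRows_mul_fromCols, ← hNsplit, ← hsplit, hNM, fromBlocks_one]
  have hN1t : N1 * tB = 1 := by
    have h := congrArg Matrix.toBlocks₁₁ hfour
    simp only [Matrix.toBlocks_fromBlocks₁₁] at h
    exact h
  have hN1s : N1 * sB = 0 := by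
    have h := congrArg Matrix.toBlocks₁₂ hfour
    simp only [Matrix.toBlocks_fromBlocks₁₂] at h
    exact h
  have hN2t : N2 * tB = 0 := by
    have h := congrArg Matrix.toBlocks₂₁ hfour
    simp only [Matrix.toBlocks_fromBlocks₂₁] at h
    exact h
  have hN2s : N2 * sB = 1 := by
    have h := congrArg Matrix.toBlocks₂₂ hfour
    simp only [Matrix.toBlocks_fromBlocks₂₂] at h
    exact h
  have hMN' : tB * N1 + sB * N2 = 1 := by
    rw [← fromCols_mul_fromRows, ← hsplit, ← hNsplit, hMN]
  have hdecomp : ∀ w : K3Idx → ℤ, tB.mulVec (N1.mulVec w) + sB.mulVec (N2.mulVec w) = w := by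
    intro w
    have h := congrArg (fun M : Matrix K3Idx K3Idx ℤ => M.mulVec w) hMN'
    simpa [Matrix.add_mulVec, Matrix.mulVec_mulVec, Matrix.one_mulVec] using h
  -- Gram matrix computations
  have hKblocks : (BMm B t c)ᵀ * GBm B * BMm B t c
      = fromBlocks GUm 0 0 (fromBlocks GEm 0 0 (Gy3m B t c)) := by
    have h := gram3 B t c hrel
    simp only [BMm, GBm, fromBlocks_transpose, Matrix.transpose_one, Matrix.transpose_zero,
      fromBlocks_multiply, Matrix.mul_one, Matrix.one_mul, Matrix.mul_zero, Matrix.zero_mul,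
      add_zero, zero_add, Matrix.mul_assoc]
    rw [← Matrix.mul_assoc, h]
  have hGF : Mfullᵀ * LK3gram n * Mfull
      = (fromBlocks GUm 0 0 (fromBlocks GEm 0 0 (Gy3m B t c))).submatrix ⇑eCq ⇑eCq := by
    rw [LK_eq n B hBn, hMfull, Matrix.transpose_submatrix,
      Matrix.submatrix_mul_equiv ((BMm B t c)ᵀ) (GBm B) ⇑eCq eR ⇑eR,
      Matrix.submatrix_mul_equiv ((BMm B t c)ᵀ * GBm B) (BMm B t c) ⇑eCq eR ⇑eCq,
      hKblocks]
  have hblocks : fromBlocks (tBᵀ * LK3gram n * tB) (tBᵀ * LK3gram n * sB)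
      (sBᵀ * LK3gram n * tB) (sBᵀ * LK3gram n * sB)
      = (fromBlocks GUm 0 0 (fromBlocks GEm 0 0 (Gy3m B t c))).submatrix ⇑eCq ⇑eCq := by
    rw [← hGF, hsplit, transpose_fromCols, fromRows_mul, fromRows_mul_fromCols]
  have hb11 : ∀ x y, (tBᵀ * LK3gram n * tB) x y
      = (fromBlocks GUm 0 0 (fromBlocks GEm 0 0 (Gy3m B t c))) (eCq (Sum.inl x)) (eCq (Sum.inl y)) := by
    intro x y
    have h := congrFun (congrFun hblocks (Sum.inl x)) (Sum.inl y)
    simpa using h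
  have hb12 : ∀ x y, (tBᵀ * LK3gram n * sB) x y
      = (fromBlocks GUm 0 0 (fromBlocks GEm 0 0 (Gy3m B t c))) (eCq (Sum.inl x)) (eCq (Sum.inr y)) := by
    intro x y
    have h := congrFun (congrFun hblocks (Sum.inl x)) (Sum.inr y)
    simpa using h
  have hb22 : ∀ x y, (sBᵀ * LK3gram n * sB) x y
      = (fromBlocks GUm 0 0 (fromBlocks GEm 0 0 (Gy3m B t c))) (eCq (Sum.inr x)) (eCq (Sum.inr y)) := by
    intro x y
    have h := congrFun (congrFun hblocks (Sum.inr x)) (Sum.inr y)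
    simpa using h
  have horth : tBᵀ * LK3gram n * sB = 0 := by
    ext x y
    rw [hb12 x y]
    have hx0 : x = 0 := Subsingleton.elim _ _
    subst hx0
    rw [show eCq (Sum.inl 0) = Sum.inr (Sum.inr 0) from rfl,
      show eCq (Sum.inr y) = shufto (Sum.inr (e22 y)) from rfl]
    rcases e22 y with p | q | a
    · rfl
    · rfl
    · fin_cases a <;> rfl
  have hTgram : tBᵀ * LK3gram n * tB = !![(β : ℤ)] := by
    ext x y
    rw [hb11 x y]
    have hx0 : x = 0 := Subsingleton.elim _ _
    have hy0 : y = 0 := Subsingleton.elim _ _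
    subst hx0; subst hy0
    show Gy3m B t c 0 0 = !![(β:ℤ)] 0 0
    simp [Gy3m, hB]
  -- the S-gram identification
  set GS' : Matrix SIdx SIdx ℤ := Matrix.of (fun s s' =>
      (fromBlocks GUm 0 0 (fromBlocks GEm 0 0 (Gy3m B t c)))
        (shufto (Sum.inr s)) (shufto (Sum.inr s'))) with hGS'def
  have hGSsub : sBᵀ * LK3gram n * sB = GS'.submatrix ⇑e22 ⇑e22 := by
    ext y y'
    rw [hb22 y y']
    rfl
  have hGS' : GS' = fromBlocks GUm 0 0 (fromBlocks GEm 0 0 (Gym B t c)) := by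
    ext s s'
    rcases s with p | q | a <;> rcases s' with p' | q' | b
    · rfl
    · rfl
    · fin_cases b <;> rfl
    · rfl
    · rfl
    · fin_cases b <;> rfl
    · fin_cases a <;> rfl
    · fin_cases a <;> rfl
    · fin_cases a <;> fin_cases b <;> rfl
  set P2 : Matrix SIdx SIdx ℤ := fromBlocks 1 0 0 (fromBlocks 1 0 0 R) with hP2def
  set Q2 : Matrix SIdx SIdx ℤ := fromBlocks 1 0 0 (fromBlocks 1 0 0 R') with hQ2def
  have hP2Q2 : P2 * Q2 = 1 := by
    simp only [hP2def, hQ2def, fromBlocks_multiply, Matrix.mul_one, Matrix.one_mul,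
      Matrix.mul_zero, Matrix.zero_mul, add_zero, zero_add, hRR', fromBlocks_one]
  have hQ2P2 : Q2 * P2 = 1 := by
    simp only [hP2def, hQ2def, fromBlocks_multiply, Matrix.mul_one, Matrix.one_mul,
      Matrix.mul_zero, Matrix.zero_mul, add_zero, zero_add, hR'R, fromBlocks_one]
  have hSg : P2ᵀ * GS' * P2 = Sgram := by
    rw [hGS', hP2def]
    simp only [fromBlocks_transpose, Matrix.transpose_one, Matrix.transpose_zero,
      fromBlocks_multiply, Matrix.mul_one, Matrix.one_mul, Matrix.mul_zero, Matrix.zero_mul,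
      add_zero, zero_add]
    rw [hGyR, Sgram_blocks]
  -- final assembly
  refine ⟨tB, sB, ?_, ?_, ?_, ?_, horth, hTgram, ?_, ?_, ?_⟩
  · -- injectivity of tB
    intro x1 x2 hx
    have h := congrArg (fun w => N1.mulVec w) hx
    simpa [Matrix.mulVecLin_apply, Matrix.mulVec_mulVec, hN1t, Matrix.one_mulVec] using h
  · -- injectivity of sB
    intro x1 x2 hx
    have h := congrArg (fun w => N2.mulVec w) hx
    simpa [Matrix.mulVecLin_apply, Matrix.mulVec_mulVec, hN2s, Matrix.one_mulVec] using h
  · -- primitivity of T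
    intro w k hk hkv
    obtain ⟨x, hx⟩ := hkv
    have hx' : tB *ᵥ x = k • w := by simpa [Matrix.mulVecLin_apply] using hx
    have h2 : k • (N2.mulVec w) = 0 := by
      calc k • (N2.mulVec w) = N2.mulVec (k • w) := (Matrix.mulVec_smul N2 k w).symm
        _ = N2.mulVec (tB.mulVec x) := by rw [hx']
        _ = (N2 * tB).mulVec x := Matrix.mulVec_mulVec x N2 tB
        _ = 0 := by rw [hN2t, Matrix.zero_mulVec]
    have hz : N2.mulVec w = 0 := by
      funext i
      have h := congrFun h2 i
      simp only [Pi.smul_apply, smul_eq_mul, Pi.zero_apply] at h ⊢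
      rcases mul_eq_zero.mp h with h' | h'
      · exact absurd h' hk
      · exact h'
    refine ⟨N1.mulVec w, ?_⟩
    have h3 := hdecomp w
    rw [hz, Matrix.mulVec_zero, add_zero] at h3
    simpa [Matrix.mulVecLin_apply] using h3
  · -- primitivity of S
    intro w k hk hkv
    obtain ⟨x, hx⟩ := hkv
    have hx' : sB *ᵥ x = k • w := by simpa [Matrix.mulVecLin_apply] using hx
    have h2 : k • (N1.mulVec w) = 0 := by
      calc k • (N1.mulVec w) = N1.mulVec (k • w) := (Matrix.mulVec_smul N1 k w).symm
        _ = N1.mulVec (sB.mulVec x) := by rw [hx']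
        _ = (N1 * sB).mulVec x := Matrix.mulVec_mulVec x N1 sB
        _ = 0 := by rw [hN1s, Matrix.zero_mulVec]
    have hz : N1.mulVec w = 0 := by
      funext i
      have h := congrFun h2 i
      simp only [Pi.smul_apply, smul_eq_mul, Pi.zero_apply] at h ⊢
      rcases mul_eq_zero.mp h with h' | h'
      · exact absurd h' hk
      · exact h'
    refine ⟨N2.mulVec w, ?_⟩
    have h3 := hdecomp w
    rw [hz, Matrix.mulVec_zero, zero_add] at h3
    simpa [Matrix.mulVecLin_apply] using h3
  · -- base change to Sgram
    refine ⟨P2.submatrix ⇑e22 _root_.id, Q2.submatrix _root_.id ⇑e22, ?_, ?_, ?_⟩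
    · ext j j'
      calc (P2.submatrix ⇑e22 _root_.id * Q2.submatrix _root_.id ⇑e22) j j'
          = (P2 * Q2) (e22 j) (e22 j') := rfl
        _ = (1 : Matrix SIdx SIdx ℤ) (e22 j) (e22 j') := by rw [hP2Q2]
        _ = (1 : Matrix (Fin 22) (Fin 22) ℤ) j j' := by
            simp [Matrix.one_apply]
    · ext s s'
      calc (Q2.submatrix _root_.id ⇑e22 * P2.submatrix ⇑e22 _root_.id) s s'
          = ∑ j, Q2 s (e22 j) * P2 (e22 j) s' := rfl
        _ = ∑ u, Q2 s u * P2 u s' := Equiv.sum_comp e22 (fun u => Q2 s u * P2 u s')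
        _ = (Q2 * P2) s s' := (Matrix.mul_apply).symm
        _ = (1 : Matrix SIdx SIdx ℤ) s s' := by rw [hQ2P2]
    · rw [hGSsub]
      have e1 : (P2.submatrix ⇑e22 _root_.id)ᵀ = P2ᵀ.submatrix _root_.id ⇑e22 := rfl
      rw [e1,
        Matrix.submatrix_mul_equiv (P2ᵀ) GS' _root_.id e22 ⇑e22,
        Matrix.submatrix_mul_equiv (P2ᵀ * GS') P2 _root_.id e22 _root_.id,
        Matrix.submatrix_id_id, hSg]
  · -- disjointness
    rw [Submodule.disjoint_def]
    intro w hw1 hw2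
    obtain ⟨x, hx⟩ := hw1
    obtain ⟨y, hy⟩ := hw2
    have hx' : tB *ᵥ x = w := by simpa [Matrix.mulVecLin_apply] using hx
    have hy' : sB *ᵥ y = w := by simpa [Matrix.mulVecLin_apply] using hy
    have hx0 : x = 0 := by
      calc x = (N1 * tB).mulVec x := by rw [hN1t, Matrix.one_mulVec]
        _ = N1.mulVec (tB.mulVec x) := (Matrix.mulVec_mulVec x N1 tB).symm
        _ = N1.mulVec (sB.mulVec y) := by rw [hx', hy']
        _ = (N1 * sB).mulVec y := Matrix.mulVec_mulVec y N1 sB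
        _ = 0 := by rw [hN1s, Matrix.zero_mulVec]
    rw [← hx, hx0, map_zero]
  · -- the sum is everything
    rw [Submodule.eq_top_iff']
    intro w
    refine Submodule.mem_sup.mpr
      ⟨tB.mulVec (N1.mulVec w), ⟨N1.mulVec w, by simp [Matrix.mulVecLin_apply]⟩,
       sB.mulVec (N2.mulVec w), ⟨N2.mulVec w, by simp [Matrix.mulVecLin_apply]⟩,
       hdecomp w⟩

/-- if `3` divides `2(n-1)` exactly once (`2(n-1) = 3β`, `3 ∤ β`) and `-3`
is a quadratic residue modulo `4(n-1)/3`, then the admissible triple `(3,11,0)` is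
realized by orthogonal primitive sublattices `T = ⟨β⟩` (rank one, Gram `(β)`) and
`S ≅ U^{⊕2} ⊕ E₈^{⊕2} ⊕ A₂` of `L`, with `L = T ⊕ S`. -/
theorem stmt12 {n β : ℕ} (hn : 2 ≤ n) (hfact : 2 * (n - 1) = 3 * β) (hnd : ¬ 3 ∣ β)
    (hqr : ∃ x : ZMod (4 * (n - 1) / 3), x ^ 2 = -(3 : ZMod (4 * (n - 1) / 3))) :
    ∃ (tB : Matrix K3Idx (Fin 1) ℤ) (sB : Matrix K3Idx (Fin 22) ℤ),
      Function.Injective tB.mulVecLin ∧ Function.Injective sB.mulVecLin ∧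
      IsPrimitiveSub (LinearMap.range tB.mulVecLin) ∧
      IsPrimitiveSub (LinearMap.range sB.mulVecLin) ∧
      -- T and S are orthogonal:
      tBᵀ * LK3gram n * sB = 0 ∧
      -- T = ⟨β⟩:
      tBᵀ * LK3gram n * tB = !![(β : ℤ)] ∧
      -- S ≅ U^{⊕2} ⊕ E₈^{⊕2} ⊕ A₂ (integral base change):
      (∃ (P : Matrix (Fin 22) SIdx ℤ) (Q : Matrix SIdx (Fin 22) ℤ),
        P * Q = 1 ∧ Q * P = 1 ∧ Pᵀ * (sBᵀ * LK3gram n * sB) * P = Sgram) ∧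
      -- L = T ⊕ S:
      Disjoint (LinearMap.range tB.mulVecLin) (LinearMap.range sB.mulVecLin) ∧
      LinearMap.range tB.mulVecLin ⊔ LinearMap.range sB.mulVecLin = ⊤ := by
  classical
  -- ## number-theoretic setup
  have hβpos : 0 < β := by omega
  have h43 : 4 * (n - 1) / 3 = 2 * β := by omega
  rw [h43] at hqr
  haveI : NeZero (2 * β) := ⟨by omega⟩
  obtain ⟨x, hx⟩ := hqr
  set X : ℤ := (x.val : ℤ) with hX
  have hXx : ((X : ℤ) : ZMod (2*β)) = x := by
    rw [hX]; push_cast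
    exact ZMod.natCast_rightInverse x
  have hdvd : ((2*β : ℕ) : ℤ) ∣ X^2 + 3 := by
    have h0 : ((X^2 + 3 : ℤ) : ZMod (2*β)) = 0 := by
      push_cast
      rw [hXx, hx]; ring
    exact (ZMod.intCast_zmod_eq_zero_iff_dvd _ _).mp h0
  have hg : Nat.Coprime 3 (2*β) := (Nat.Prime.coprime_iff_not_dvd (by norm_num)).mpr (by omega)
  have hco : IsCoprime (3:ℤ) (2*(β:ℤ)) := by
    rw [Int.isCoprime_iff_gcd_eq_one]
    have : (2*(β:ℤ)) = ((2*β : ℕ) : ℤ) := by push_cast; ring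
    rw [this]
    exact_mod_cast hg
  have hco' : IsCoprime (2*(β:ℤ)) (3:ℤ) := hco.symm
  obtain ⟨u, v, huv⟩ := hco
  set c : ℤ := u * X with hcdef
  obtain ⟨D1, hD1⟩ := hdvd
  have h9 : (2*(β:ℤ)) ∣ 3*(3*c^2+1) := by
    refine ⟨9*u^2*D1 + 3*v*(3*u+1), ?_⟩
    have hD1' : X^2 + 3 = 2*(β:ℤ) * D1 := by push_cast at hD1 ⊢; linarith
    rw [hcdef]
    linear_combination (9*u^2) * hD1' - (9*u+3) * huv
  have hdvd2 : (2*(β:ℤ)) ∣ (3*c^2+1) := hco'.dvd_of_dvd_mul_left h9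
  obtain ⟨t, htdef⟩ := hdvd2
  have hrel : 2*(β:ℤ)*t - 3*c^2 = 1 := by linarith
  have hβZ : (0:ℤ) < (β:ℤ) := by exact_mod_cast hβpos
  have ht0 : 0 < t := by nlinarith [sq_nonneg c]
  have hBn : 2*((n:ℤ)-1) = 3*(β:ℤ) := by omega
  have hBeven : Even ((β:ℤ)) := by
    have h2 : 2 ∣ β := by omega
    obtain ⟨m, rfl⟩ := h2
    exact ⟨(m:ℤ), by push_cast; ring⟩
  exact build n β ((β:ℤ)) t c rfl hrel hBn hBeven ht0
end

section
/- Let A_⟨6⟩ = Z/6Z with quadratic form value 1/6 on a generator s, and A = Z/3Z(4/3) ⊕ Z/3Z(4/3) with generators t_1, t_2. Let Γ ⊆ A_⟨6⟩(-1) ⊕ A be the subgroup generated by 2s + t_1 + t_2. Then Γ is isotropic, its orthogonal complement is Γ^⊥ = ⟨s + t_1, s + t_2⟩, and the quotient Γ^⊥/Γ is cyclic of order 6 with quadratic form value 7/6 mod 2Z on the generator [s + t_1]. -/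
/-- `ℚ/2ℤ`. -/
abbrev QMod2 : Type := ℚ ⧸ AddSubgroup.zmultiples (2 : ℚ)
/-- `ℚ/ℤ`. -/
abbrev QMod1 : Type := ℚ ⧸ AddSubgroup.zmultiples (1 : ℚ)

def pi2 : ℚ → QMod2 := QuotientAddGroup.mk
def pi1 : ℚ → QMod1 := QuotientAddGroup.mk

/-- The group `A_{⟨6⟩}(-1) ⊕ ℤ/3(4/3) ⊕ ℤ/3(4/3)` supporting the finite quadratic form. -/
abbrev A16 : Type := ZMod 6 × ZMod 3 × ZMod 3

/-- The quadratic form `(-q_{⟨6⟩}) ⊕ q`: `q(s,t₁,t₂) = -s²/6 + 4t₁²/3 + 4t₂²/3 (mod 2ℤ)`. -/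
def q16 (x : A16) : QMod2 :=
  pi2 (-(x.1.val : ℚ) ^ 2 / 6 + 4 * (x.2.1.val : ℚ) ^ 2 / 3 + 4 * (x.2.2.val : ℚ) ^ 2 / 3)

/-- The associated bilinear form, valued in `ℚ/ℤ`. -/
def b16 (x y : A16) : QMod1 :=
  pi1 (-(x.1.val : ℚ) * (y.1.val : ℚ) / 6 + 4 * (x.2.1.val : ℚ) * (y.2.1.val : ℚ) / 3 +
    4 * (x.2.2.val : ℚ) * (y.2.2.val : ℚ) / 3)

/-- `Γ` = subgroup generated by `2s + t₁ + t₂`. -/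
def Γ16 : AddSubgroup A16 := AddSubgroup.closure {((2 : ZMod 6), (1 : ZMod 3), (1 : ZMod 3))}

/- ### Auxiliary material -/

private abbrev gG : A16 := ((2 : ZMod 6), (1 : ZMod 3), (1 : ZMod 3))
private abbrev g1 : A16 := ((1 : ZMod 6), (1 : ZMod 3), (0 : ZMod 3))
private abbrev g2 : A16 := ((1 : ZMod 6), (0 : ZMod 3), (1 : ZMod 3))

private def P (x : A16) : Prop := (x.2.1.val + x.2.2.val + 2 * x.1.val) % 3 = 0

private instance : DecidablePred P := fun x => by unfold P; infer_instance

private lemma P_add : ∀ a b : A16, P a → P b → P (a + b) := by decide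
private lemma P_neg : ∀ a : A16, P a → P (-a) := by decide
private lemma P_zero : P 0 := by decide

private lemma P_decomp : ∀ x : A16, P x →
    ∃ k : Fin 6, ∃ j : Fin 3, x = k.val • g1 + j.val • gG := by decide

private lemma P_decomp2 : ∀ x : A16, P x →
    ∃ k : Fin 6, ∃ j : Fin 3, x = k.val • g1 + j.val • g2 := by decide

private lemma pi2_eq_of (a b : ℚ) (m : ℤ) (h : b + 2 * (m : ℚ) = a) : pi2 a = pi2 b := by
  unfold pi2
  rw [QuotientAddGroup.eq]
  exact ⟨-m, by show (-m : ℤ) • (2:ℚ) = -a + b; rw [zsmul_eq_mul]; push_cast; linarith⟩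

private lemma pi2_zero_of (a : ℚ) (m : ℤ) (h : 2 * (m : ℚ) = a) : pi2 a = 0 := by
  unfold pi2
  rw [QuotientAddGroup.eq_zero_iff]
  exact ⟨m, by show (m : ℤ) • (2:ℚ) = a; rw [zsmul_eq_mul]; linarith⟩

private lemma pi1_zero_of (a : ℚ) (m : ℤ) (h : (m : ℚ) = a) : pi1 a = 0 := by
  unfold pi1
  rw [QuotientAddGroup.eq_zero_iff]
  exact ⟨m, by show (m : ℤ) • (1:ℚ) = a; rw [zsmul_eq_mul, mul_one]; exact h⟩

private lemma q16_mk (a : ZMod 6) (b c : ZMod 3) :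
    q16 (a, b, c) = pi2 (-(a.val : ℚ) ^ 2 / 6 + 4 * (b.val : ℚ) ^ 2 / 3 +
      4 * (c.val : ℚ) ^ 2 / 3) := rfl

private lemma b16_mk (a : ZMod 6) (b c : ZMod 3) (a' : ZMod 6) (b' c' : ZMod 3) :
    b16 (a, b, c) (a', b', c') = pi1 (-(a.val : ℚ) * (a'.val : ℚ) / 6 +
      4 * (b.val : ℚ) * (b'.val : ℚ) / 3 + 4 * (c.val : ℚ) * (c'.val : ℚ) / 3) := rfl

private lemma gG_mem : gG ∈ Γ16 := AddSubgroup.subset_closure rfl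

/-- Explicit description of `Γ`. -/
private lemma mem_Γ16 {x : A16} : x ∈ Γ16 ↔
    x = 0 ∨ x = gG ∨ x = ((4 : ZMod 6), (2 : ZMod 3), (2 : ZMod 3)) := by
  constructor
  · intro hx
    refine AddSubgroup.closure_induction (p := fun y _ =>
        y = 0 ∨ y = gG ∨ y = ((4 : ZMod 6), (2 : ZMod 3), (2 : ZMod 3))) ?_ ?_ ?_ ?_ hx
    · intro y hy
      rw [Set.mem_singleton_iff] at hy
      subst hy; decide
    · decide
    · intro a b _ _ ha hb
      rcases ha with rfl | rfl | rfl <;> rcases hb with rfl | rfl | rfl <;> decide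
    · intro a _ ha
      rcases ha with rfl | rfl | rfl <;> decide
  · rintro (rfl | rfl | rfl)
    · exact zero_mem _
    · exact gG_mem
    · have h : ((4 : ZMod 6), (2 : ZMod 3), (2 : ZMod 3)) = gG + gG := by decide
      rw [h]; exact add_mem gG_mem gG_mem

/-- Members of `Γ^⊥` satisfy the congruence `P`. -/
private lemma perp_P {x : A16} (hx : ∀ y ∈ Γ16, b16 x y = 0) : P x := by
  have h0 := hx gG gG_mem
  obtain ⟨a, b, c⟩ := x
  rw [b16_mk, show ((2 : ZMod 6)).val = 2 from rfl, show ((1 : ZMod 3)).val = 1 from rfl,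
    pi1, QuotientAddGroup.eq_zero_iff] at h0
  obtain ⟨m, hm⟩ := h0
  simp only [zsmul_eq_mul, mul_one] at hm
  have h3 : (3 * m : ℤ) = -(a.val : ℤ) + 4 * b.val + 4 * c.val := by
    have : 3 * (m : ℚ) = -(a.val : ℚ) + 4 * b.val + 4 * c.val := by
      rw [hm]; push_cast; ring
    exact_mod_cast this
  show (b.val + c.val + 2 * a.val) % 3 = 0
  omega

/-- Elements satisfying `P` lie in `Γ^⊥`. -/
private lemma P_perp {x : A16} (hP : P x) : ∀ y ∈ Γ16, b16 x y = 0 := by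
  obtain ⟨a, b, c⟩ := x
  have hP' : (b.val + c.val + 2 * a.val) % 3 = 0 := hP
  obtain ⟨m, hm⟩ : ∃ m : ℤ, -(a.val : ℤ) + 4 * b.val + 4 * c.val = 3 * m :=
    ⟨4 * ((b.val + c.val + 2 * a.val) / 3 : ℕ) - 3 * (a.val : ℤ), by omega⟩
  have hmQ : -(a.val : ℚ) + 4 * b.val + 4 * c.val = 3 * m := by exact_mod_cast hm
  intro y hy
  rcases mem_Γ16.1 hy with rfl | rfl | rfl
  · rw [show (0 : A16) = ((0 : ZMod 6), (0 : ZMod 3), (0 : ZMod 3)) from rfl, b16_mk,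
      show ((0 : ZMod 6)).val = 0 from rfl, show ((0 : ZMod 3)).val = 0 from rfl]
    exact pi1_zero_of _ 0 (by push_cast; ring)
  · rw [b16_mk, show ((2 : ZMod 6)).val = 2 from rfl, show ((1 : ZMod 3)).val = 1 from rfl]
    exact pi1_zero_of _ m (by push_cast; linarith)
  · rw [b16_mk, show ((4 : ZMod 6)).val = 4 from rfl, show ((2 : ZMod 3)).val = 2 from rfl]
    exact pi1_zero_of _ (2 * m) (by push_cast; linarith)

set_option maxHeartbeats 2000000 in
/-- `Γ = ⟨2s + t₁ + t₂⟩ ⊆ A_{⟨6⟩}(-1) ⊕ ℤ/3(4/3)^{⊕2}` is isotropic, its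
orthogonal complement is `Γ^⊥ = ⟨s + t₁, s + t₂⟩`, and `Γ^⊥/Γ` is cyclic of order 6,
generated by the class of `s + t₁`, on which the induced quadratic form is well defined
with value `7/6 (mod 2ℤ)`. -/
theorem stmt16 :
    -- Γ is isotropic:
    (∀ x ∈ Γ16, q16 x = 0) ∧
    -- Γ^⊥ = ⟨s + t₁, s + t₂⟩:
    ({x : A16 | ∀ y ∈ Γ16, b16 x y = 0} =
      ↑(AddSubgroup.closure {((1 : ZMod 6), (1 : ZMod 3), (0 : ZMod 3)),
                             ((1 : ZMod 6), (0 : ZMod 3), (1 : ZMod 3))})) ∧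
    -- Γ ⊆ Γ^⊥:
    (∀ x ∈ Γ16, ∀ y ∈ Γ16, b16 x y = 0) ∧
    -- Γ^⊥/Γ is cyclic, generated by the class of `g = s + t₁`:
    (∀ x ∈ {x : A16 | ∀ y ∈ Γ16, b16 x y = 0}, ∃ k : ℤ,
      x - k • ((1 : ZMod 6), (1 : ZMod 3), (0 : ZMod 3)) ∈ Γ16) ∧
    -- the class of `g` has order exactly 6 in `Γ^⊥/Γ`:
    (∀ k : ℤ, k • ((1 : ZMod 6), (1 : ZMod 3), (0 : ZMod 3)) ∈ Γ16 ↔ (6 : ℤ) ∣ k) ∧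
    -- the induced quadratic form on `Γ^⊥/Γ` takes value `7/6` at the class of `g`:
    (∀ y ∈ Γ16, q16 (((1 : ZMod 6), (1 : ZMod 3), (0 : ZMod 3)) + y) = pi2 (7 / 6)) := by
  have hg1P : P g1 := by decide
  have hsmul : ∀ k : ℤ, k • (g1 : A16) = ((k : ZMod 6), (k : ZMod 3), (0 : ZMod 3)) := by
    intro k
    rw [Prod.smul_mk, Prod.smul_mk, zsmul_one, zsmul_one, smul_zero]
  refine ⟨?_, ?_, ?_, ?_, ?_, ?_⟩
  · -- isotropy
    intro x hx
    rcases mem_Γ16.1 hx with rfl | rfl | rfl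
    · rw [show (0 : A16) = ((0 : ZMod 6), (0 : ZMod 3), (0 : ZMod 3)) from rfl, q16_mk,
        show ((0 : ZMod 6)).val = 0 from rfl, show ((0 : ZMod 3)).val = 0 from rfl]
      exact pi2_zero_of _ 0 (by norm_num)
    · rw [q16_mk, show ((2 : ZMod 6)).val = 2 from rfl, show ((1 : ZMod 3)).val = 1 from rfl]
      exact pi2_zero_of _ 1 (by norm_num)
    · rw [q16_mk, show ((4 : ZMod 6)).val = 4 from rfl, show ((2 : ZMod 3)).val = 2 from rfl]
      exact pi2_zero_of _ 4 (by norm_num)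
  · -- Γ^⊥ = closure {g1, g2}
    ext x
    simp only [Set.mem_setOf_eq, SetLike.mem_coe]
    constructor
    · intro hx
      obtain ⟨k, j, hkj⟩ := P_decomp2 x (perp_P hx)
      rw [hkj]
      have h1 : (g1 : A16) ∈ AddSubgroup.closure {((1 : ZMod 6), (1 : ZMod 3), (0 : ZMod 3)),
          ((1 : ZMod 6), (0 : ZMod 3), (1 : ZMod 3))} :=
        AddSubgroup.subset_closure (Set.mem_insert _ _)
      have h2 : (g2 : A16) ∈ AddSubgroup.closure {((1 : ZMod 6), (1 : ZMod 3), (0 : ZMod 3)),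
          ((1 : ZMod 6), (0 : ZMod 3), (1 : ZMod 3))} :=
        AddSubgroup.subset_closure (Set.mem_insert_of_mem _ rfl)
      exact add_mem (AddSubgroup.nsmul_mem _ h1 _) (AddSubgroup.nsmul_mem _ h2 _)
    · intro hx
      refine P_perp ?_
      refine AddSubgroup.closure_induction (p := fun y _ => P y) ?_ P_zero
        (fun a b _ _ => P_add a b) (fun a _ => P_neg a) hx
      intro y hy
      rcases Set.mem_insert_iff.mp hy with rfl | hy'
      · exact hg1P
      · rw [Set.mem_singleton_iff] at hy'; subst hy'; decide
  · -- Γ ⊆ Γ^⊥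
    intro x hx
    refine P_perp ?_
    rcases mem_Γ16.1 hx with rfl | rfl | rfl <;> decide
  · -- cyclic generated by class of g1
    intro x hx
    obtain ⟨k, j, hkj⟩ := P_decomp x (perp_P hx)
    refine ⟨(k.val : ℤ), ?_⟩
    have h : x - (k.val : ℤ) • (g1 : A16) = j.val • gG := by
      rw [hkj, natCast_zsmul]; abel
    rw [h]
    exact AddSubgroup.nsmul_mem _ gG_mem _
  · -- order 6
    intro k
    constructor
    · intro hk
      rw [hsmul k] at hk
      rcases mem_Γ16.1 hk with h | h | h
      · have h1 : (k : ZMod 6) = 0 := congrArg Prod.fst h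
        exact (ZMod.intCast_zmod_eq_zero_iff_dvd k 6).1 h1
      · have h1 : (0 : ZMod 3) = 1 := congrArg (fun p => p.2.2) h
        exact absurd h1 (by decide)
      · have h1 : (0 : ZMod 3) = 2 := congrArg (fun p => p.2.2) h
        exact absurd h1 (by decide)
    · rintro ⟨m, rfl⟩
      have h6 : (6 : ℤ) • (g1 : A16) = 0 := by
        rw [hsmul]; decide
      rw [mul_comm, mul_smul, h6, smul_zero]
      exact zero_mem _
  · -- value 7/6
    intro y hy
    rcases mem_Γ16.1 hy with rfl | rfl | rfl
    · have e : (g1 : A16) + 0 = ((1 : ZMod 6), (1 : ZMod 3), (0 : ZMod 3)) := by decide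
      rw [e, q16_mk, show ((1 : ZMod 6)).val = 1 from rfl, show ((1 : ZMod 3)).val = 1 from rfl,
        show ((0 : ZMod 3)).val = 0 from rfl]
      exact pi2_eq_of _ _ 0 (by norm_num)
    · have e : (g1 : A16) + gG = ((3 : ZMod 6), (2 : ZMod 3), (1 : ZMod 3)) := by decide
      rw [e, q16_mk, show ((3 : ZMod 6)).val = 3 from rfl, show ((2 : ZMod 3)).val = 2 from rfl,
        show ((1 : ZMod 3)).val = 1 from rfl]
      exact pi2_eq_of _ _ 2 (by norm_num)
    · have e : (g1 : A16) + ((4 : ZMod 6), (2 : ZMod 3), (2 : ZMod 3)) =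
          ((5 : ZMod 6), (0 : ZMod 3), (2 : ZMod 3)) := by decide
      rw [e, q16_mk, show ((5 : ZMod 6)).val = 5 from rfl, show ((0 : ZMod 3)).val = 0 from rfl,
        show ((2 : ZMod 3)).val = 2 from rfl]
      exact pi2_eq_of _ _ 0 (by norm_num)
end

section
/- Let π be the endomorphism of U ⊕ U(3) (basis e_1, e_2 for U and f_1, f_2 for U(3)) given by e_1 ↦ e_1 - f_1, e_2 ↦ -2e_2 - f_2, f_1 ↦ -2f_1 + 3e_1, f_2 ↦ f_2 + 3e_2. Then π is an isometry of order 3, and the Z/3Z-valued homomorphism α = (e_1, -) satisfies α ∘ π = α. -/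
open Matrix

/-- Gram matrix of `U ⊕ U(3)` in the basis `e₁, e₂, f₁, f₂`. -/
def UU3gram : Matrix (Fin 4) (Fin 4) ℤ :=
  !![0, 1, 0, 0; 1, 0, 0, 0; 0, 0, 0, 3; 0, 0, 3, 0]

/-- Matrix of `π : e₁ ↦ e₁ - f₁, e₂ ↦ -2e₂ - f₂, f₁ ↦ 3e₁ - 2f₁, f₂ ↦ 3e₂ + f₂`
(columns are the images of the basis vectors). -/
def piIso : Matrix (Fin 4) (Fin 4) ℤ :=
  !![1, 0, 3, 0; 0, -2, 0, 3; -1, 0, -2, 0; 0, -1, 0, 1]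

/-- `π` is an isometry of `U ⊕ U(3)` of order 3, and the `ℤ/3ℤ`-valued
homomorphism `α = (e₁, -)` satisfies `α ∘ π = α`. -/
theorem stmt17 :
    piIsoᵀ * UU3gram * piIso = UU3gram ∧
    piIso ^ 3 = 1 ∧ piIso ≠ 1 ∧
    (∀ v : Fin 4 → ℤ,
      ((UU3gram.mulVec (piIso.mulVec v)) 0 : ZMod 3) = ((UU3gram.mulVec v) 0 : ZMod 3)) := by
  refine ⟨?_, ?_, ?_, ?_⟩
  · decide
  · decide
  · decide
  · intro v
    have : (UU3gram.mulVec (piIso.mulVec v)) 0 = (UU3gram.mulVec v) 0 + 3 * (v 3 - v 1) := by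
      simp [UU3gram, piIso, mulVec, dotProduct, Fin.sum_univ_four]
      ring
    rw [this]
    push_cast
    have h3 : (3 : ZMod 3) = 0 := rfl
    rw [h3]
    ring
end
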